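/- There exist absolute constants c > 0 and C > 0 such that the following holds. Let 1 ≤ k ≤ d and let W* ∈ ℝ^{d×k} have nonzero columns w₁,…,w_k and full column rank, with condition number κ := s_max(W*)/s_min(W*) (ratio of largest to smallest singular value); write w̄_i := w_i/‖w_i‖₂. Let U ∈ ℝ^{d×k} have orthonormal columns spanning the column space of W*. Let V ∈ ℝ^{d×k} have orthonormal columns with ‖V Vᵀ − U Uᵀ‖ ≤ δ₂, where δ₂ ≤ c/(κ² √k). Let s₁,…,s_k ∈ {−1,1} and û₁,…,û_k ∈ ℝ^k satisfy ‖s_i û_i − Vᵀ w̄_i‖ ≤ δ₃ with δ₃ ≤ c/(κ² √k). Let z* ∈ ℝ^k and Q₁ := Σ_{i=1}^k z*_i s_i w̄_i ≠ 0, and let Q̂₁ ∈ ℝ^d satisfy ‖Q̂₁ − Q₁‖ ≤ δ₄ ‖Q₁‖ with δ₄ ≤ 1/4. Then the least-squares problem min_{z ∈ ℝ^k} ‖Σ_{i=1}^k z_i V û_i − Q̂₁‖₂ has a unique minimizer ẑ, and for every i ∈ [k]: |ẑ_i − z*_i| ≤ C (κ⁴ k^{3/2} (δ₂ + δ₃)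 + κ² k^{1/2} δ₄) ‖z*‖₁. -/

import Mathlib

open Matrix

/-- Euclidean norm of a finite real vector. -/
noncomputable def l2norm {ι : Type*} [Fintype ι] (x : ι → ℝ) : ℝ :=
  Real.sqrt (∑ i, x i ^ 2)

/-- Spectral (ℓ₂ operator) norm of a real matrix. -/
noncomputable def specNorm {m n : Type*} [Fintype m] [Fintype n] [DecidableEq n]
    (M : Matrix m n ℝ) : ℝ :=
  ‖LinearMap.toContinuousLinearMap (Matrix.toEuclideanLin M)‖

/-- Smallest singular value of a tall matrix (minimum of `‖Wx‖` over unit vectors `x`). -/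
noncomputable def sminCol {d k : ℕ} (W : Matrix (Fin d) (Fin k) ℝ) : ℝ :=
  sInf {y | ∃ x : Fin k → ℝ, l2norm x = 1 ∧ y = l2norm (W.mulVec x)}

namespace LSR

noncomputable def toE {ι : Type*} [Fintype ι] (x : ι → ℝ) : EuclideanSpace ℝ ι :=
  (WithLp.equiv 2 (ι → ℝ)).symm x

variable {ι : Type*} [Fintype ι]

@[simp] lemma toE_apply (x : ι → ℝ) (i : ι) : toE x i = x i := rfl

lemma toE_eq_linearEquiv : (toE : (ι → ℝ) → EuclideanSpace ℝ ι)
    = (WithLp.linearEquiv 2 ℝ (ι → ℝ)).symm := rfl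

lemma toE_sub (x y : ι → ℝ) : toE (x - y) = toE x - toE y := rfl
lemma toE_add (x y : ι → ℝ) : toE (x + y) = toE x + toE y := rfl
lemma toE_smul (c : ℝ) (x : ι → ℝ) : toE (c • x) = c • toE x := rfl
lemma toE_inj {x y : ι → ℝ} (h : toE x = toE y) : x = y := congrArg WithLp.ofLp h

lemma toE_sum {κ : Type*} (s : Finset κ) (f : κ → ι → ℝ) :
    toE (∑ i ∈ s, f i) = ∑ i ∈ s, toE (f i) := by
  rw [toE_eq_linearEquiv]
  exact map_sum ((WithLp.linearEquiv 2 ℝ (ι → ℝ)).symm : (ι → ℝ) →ₗ[ℝ] EuclideanSpace ℝ ι) f s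

lemma l2norm_eq_norm (x : ι → ℝ) : l2norm x = ‖toE x‖ := by
  rw [EuclideanSpace.norm_eq]
  simp [l2norm, Real.norm_eq_abs, sq_abs]

lemma l2norm_nonneg (x : ι → ℝ) : 0 ≤ l2norm x := Real.sqrt_nonneg _

lemma l2norm_smul (c : ℝ) (x : ι → ℝ) : l2norm (c • x) = |c| * l2norm x := by
  rw [l2norm_eq_norm, l2norm_eq_norm, toE_smul, norm_smul, Real.norm_eq_abs]

lemma l2norm_eq_zero_iff {x : ι → ℝ} : l2norm x = 0 ↔ x = 0 := by
  rw [l2norm_eq_norm, norm_eq_zero]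
  exact ⟨fun h => toE_inj (by rw [h]; rfl), fun h => by simp [h, toE]⟩

lemma abs_le_l2norm (x : ι → ℝ) (i : ι) : |x i| ≤ l2norm x := by
  rw [← Real.sqrt_sq_eq_abs, l2norm]
  exact Real.sqrt_le_sqrt (Finset.single_le_sum (fun j _ => sq_nonneg (x j)) (Finset.mem_univ i))

lemma sum_abs_le_sqrt_card_mul (x : ι → ℝ) :
    ∑ i, |x i| ≤ Real.sqrt (Fintype.card ι) * l2norm x := by
  have h := sq_sum_le_card_mul_sum_sq (s := Finset.univ) (f := fun i => |x i|)
  have h2 : (∑ i, |x i|) ^ 2 ≤ (Fintype.card ι) * ∑ i, x i ^ 2 := by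
    simpa [sq_abs, Finset.card_univ] using h
  have h3 : (0:ℝ) ≤ ∑ i, |x i| := Finset.sum_nonneg fun i _ => abs_nonneg _
  calc ∑ i, |x i| = Real.sqrt ((∑ i, |x i|) ^ 2) := (Real.sqrt_sq h3).symm
    _ ≤ Real.sqrt ((Fintype.card ι) * ∑ i, x i ^ 2) := Real.sqrt_le_sqrt h2
    _ = Real.sqrt (Fintype.card ι) * l2norm x := by
        rw [Real.sqrt_mul (by positivity), l2norm]

lemma mulVec_le_specNorm {m n : Type*} [Fintype m] [Fintype n] [DecidableEq n]
    (M : Matrix m n ℝ) (x : n → ℝ) :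
    l2norm (M.mulVec x) ≤ specNorm M * l2norm x := by
  have h := (LinearMap.toContinuousLinearMap (Matrix.toEuclideanLin M)).le_opNorm (toE x)
  rw [l2norm_eq_norm, l2norm_eq_norm]
  simpa [LinearMap.coe_toContinuousLinearMap', toE, specNorm] using h

lemma specNorm_nonneg {m n : Type*} [Fintype m] [Fintype n] [DecidableEq n]
    (M : Matrix m n ℝ) : 0 ≤ specNorm M := norm_nonneg _

lemma l2norm_mulVec_ortho {d k : ℕ} (V : Matrix (Fin d) (Fin k) ℝ)
    (h : Vᵀ * V = 1) (x : Fin k → ℝ) : l2norm (V.mulVec x) = l2norm x := by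
  have key : ∑ a, (V.mulVec x a) ^ 2 = ∑ i, x i ^ 2 := by
    have h1 : (V.mulVec x) ⬝ᵥ (V.mulVec x) = x ⬝ᵥ x := by
      rw [dotProduct_mulVec, ← Matrix.mulVec_transpose, mulVec_mulVec, h, one_mulVec]
    simpa [dotProduct, sq] using h1
  rw [l2norm, l2norm, key]

lemma l2norm_mulVec_le_sum_cols {d k : ℕ} (M : Matrix (Fin d) (Fin k) ℝ) (z : Fin k → ℝ) :
    l2norm (M.mulVec z) ≤ ∑ i, |z i| * l2norm (fun a => M a i) := by
  have h1 : M.mulVec z = ∑ i, z i • (fun a => M a i) := by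
    funext a
    simp [Matrix.mulVec, dotProduct, Finset.sum_apply, mul_comm]
  rw [l2norm_eq_norm, h1, toE_sum]
  refine (norm_sum_le _ _).trans (le_of_eq ?_)
  refine Finset.sum_congr rfl fun i _ => ?_
  rw [toE_smul, norm_smul, Real.norm_eq_abs, l2norm_eq_norm]

end LSR

namespace LSR

section Smin

variable {d k : ℕ} (W : Matrix (Fin d) (Fin k) ℝ)

lemma smin_set_eq :
    {y | ∃ x : Fin k → ℝ, l2norm x = 1 ∧ y = l2norm (W.mulVec x)}
      = (fun u : EuclideanSpace ℝ (Fin k) => l2norm (W.mulVec ((WithLp.equiv 2 _) u))) ''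
          Metric.sphere 0 1 := by
  ext y
  constructor
  · rintro ⟨x, hx, rfl⟩
    exact ⟨toE x, by rwa [mem_sphere_zero_iff_norm, ← l2norm_eq_norm], by simp [toE]⟩
  · rintro ⟨u, hu, rfl⟩
    refine ⟨(WithLp.equiv 2 _) u, ?_, rfl⟩
    rw [mem_sphere_zero_iff_norm] at hu
    rw [l2norm_eq_norm]
    have : toE ((WithLp.equiv 2 (Fin k → ℝ)) u) = u := by simp [toE]
    rw [this, hu]

lemma smin_isCompact :
    IsCompact {y | ∃ x : Fin k → ℝ, l2norm x = 1 ∧ y = l2norm (W.mulVec x)} := by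
  rw [smin_set_eq]
  refine (isCompact_sphere 0 1).image ?_
  have hfe : (fun u : EuclideanSpace ℝ (Fin k) => l2norm (W.mulVec ((WithLp.equiv 2 _) u)))
      = fun u => ‖(LinearMap.toContinuousLinearMap (Matrix.toEuclideanLin W)) u‖ := by
    funext u
    rw [l2norm_eq_norm]
    congr 1
  rw [hfe]
  exact (LinearMap.toContinuousLinearMap (Matrix.toEuclideanLin W)).continuous.norm

lemma smin_set_nonempty (hk : 1 ≤ k) :
    {y | ∃ x : Fin k → ℝ, l2norm x = 1 ∧ y = l2norm (W.mulVec x)}.Nonempty := by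
  have hj : l2norm (Pi.single (⟨0, hk⟩ : Fin k) (1:ℝ)) = 1 := by
    rw [l2norm_eq_norm]
    have : toE (Pi.single (⟨0, hk⟩ : Fin k) (1:ℝ))
        = EuclideanSpace.single (⟨0, hk⟩ : Fin k) (1:ℝ) := rfl
    rw [this, EuclideanSpace.norm_single]; norm_num
  exact ⟨_, _, hj, rfl⟩

lemma smin_bddBelow :
    BddBelow {y | ∃ x : Fin k → ℝ, l2norm x = 1 ∧ y = l2norm (W.mulVec x)} := by
  refine ⟨0, fun y hy => ?_⟩
  obtain ⟨x, -, rfl⟩ := hy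
  exact l2norm_nonneg _

lemma smin_attained (hk : 1 ≤ k) :
    ∃ x : Fin k → ℝ, l2norm x = 1 ∧ sminCol W = l2norm (W.mulVec x) :=
  (smin_isCompact W).sInf_mem (smin_set_nonempty W hk)

lemma smin_le_unit {x : Fin k → ℝ} (hx : l2norm x = 1) :
    sminCol W ≤ l2norm (W.mulVec x) :=
  csInf_le (smin_bddBelow W) ⟨x, hx, rfl⟩

lemma smin_nonneg (hk : 1 ≤ k) : 0 ≤ sminCol W := by
  obtain ⟨x, -, h⟩ := smin_attained W hk
  rw [h]; exact l2norm_nonneg _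

lemma smin_mul_le (hk : 1 ≤ k) (x : Fin k → ℝ) :
    sminCol W * l2norm x ≤ l2norm (W.mulVec x) := by
  rcases eq_or_ne x 0 with rfl | hx
  · simp [l2norm_eq_zero_iff.2 rfl, Matrix.mulVec_zero, l2norm_eq_zero_iff.2 (rfl : (0 : Fin d → ℝ) = 0)]
  · have ht : 0 < l2norm x := by
      rcases (l2norm_nonneg x).lt_or_eq with h | h
      · exact h
      · exact absurd (l2norm_eq_zero_iff.1 h.symm) hx
    have hu : l2norm ((l2norm x)⁻¹ • x) = 1 := by
      rw [l2norm_smul, abs_of_pos (inv_pos.2 ht), inv_mul_cancel₀ ht.ne']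
    have h1 := smin_le_unit W hu
    rw [Matrix.mulVec_smul, l2norm_smul, abs_of_pos (inv_pos.2 ht)] at h1
    rw [mul_comm]
    calc l2norm x * sminCol W ≤ l2norm x * ((l2norm x)⁻¹ * l2norm (W.mulVec x)) :=
          mul_le_mul_of_nonneg_left h1 ht.le
      _ = l2norm (W.mulVec x) := by field_simp

lemma smin_pos (hk : 1 ≤ k) (hinj : ∀ v : Fin k → ℝ, W.mulVec v = 0 → v = 0) :
    0 < sminCol W := by
  obtain ⟨x, hx1, hx2⟩ := smin_attained W hk
  rcases (smin_nonneg W hk).lt_or_eq with h | h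
  · exact h
  · exfalso
    rw [hx2] at h
    have := hinj x (l2norm_eq_zero_iff.1 h.symm)
    rw [this, l2norm_eq_zero_iff.2 rfl] at hx1
    norm_num at hx1

lemma smin_le_spec (hk : 1 ≤ k) : sminCol W ≤ specNorm W := by
  obtain ⟨x, hx1, hx2⟩ := smin_attained W hk
  rw [hx2]
  calc l2norm (W.mulVec x) ≤ specNorm W * l2norm x := mulVec_le_specNorm W x
    _ = specNorm W := by rw [hx1, mul_one]

end Smin

end LSR

namespace LSR

variable {ι : Type*} [Fintype ι]

lemma l2norm_add_le (x y : ι → ℝ) : l2norm (x + y) ≤ l2norm x + l2norm y := by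
  rw [l2norm_eq_norm, l2norm_eq_norm, l2norm_eq_norm, toE_add]
  exact norm_add_le _ _

lemma l2norm_neg (x : ι → ℝ) : l2norm (-x) = l2norm x := by
  have : toE (-x) = -toE x := rfl
  rw [l2norm_eq_norm, l2norm_eq_norm, this, norm_neg]

section Proj

variable {E : Type*} [NormedAddCommGroup E] [InnerProductSpace ℝ E]
  (K : Submodule ℝ E) [K.HasOrthogonalProjection] (q w : E)

lemma proj_pyth (hw : w ∈ K) :
    ‖w - q‖ ^ 2 = ‖w - (K.orthogonalProjectionOnto q : E)‖ ^ 2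
      + ‖(K.orthogonalProjectionOnto q : E) - q‖ ^ 2 := by
  set p := (K.orthogonalProjectionOnto q : E) with hp
  have hpK : p ∈ K := (K.orthogonalProjectionOnto q).2
  have h0 : inner (𝕜 := ℝ) (q - p) (w - p) = (0:ℝ) :=
    Submodule.starProjection_inner_eq_zero q (w - p) (K.sub_mem hw hpK)
  have hinner : inner (𝕜 := ℝ) (w - p) (p - q) = (0:ℝ) := by
    have hneg : (p - q) = -(q - p) := by abel
    rw [hneg, inner_neg_right, real_inner_comm, h0, neg_zero]
  have hsplit : w - q = (w - p) + (p - q) := by abel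
  rw [hsplit, norm_add_sq_real, hinner]
  ring

lemma proj_min (hw : w ∈ K) :
    ‖(K.orthogonalProjectionOnto q : E) - q‖ ≤ ‖w - q‖ := by
  have h := proj_pyth K q w hw
  nlinarith [norm_nonneg (w - (K.orthogonalProjectionOnto q : E)), norm_nonneg (w - q),
    norm_nonneg ((K.orthogonalProjectionOnto q : E) - q)]

lemma proj_unique (hw : w ∈ K)
    (hle : ‖w - q‖ ≤ ‖(K.orthogonalProjectionOnto q : E) - q‖) :
    w = (K.orthogonalProjectionOnto q : E) := by
  have h := proj_pyth K q w hw
  have h2 : ‖w - (K.orthogonalProjectionOnto q : E)‖ ^ 2 ≤ 0 := by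
    nlinarith [norm_nonneg (w - q), norm_nonneg ((K.orthogonalProjectionOnto q : E) - q)]
  have h3 : ‖w - (K.orthogonalProjectionOnto q : E)‖ = 0 := by
    nlinarith [norm_nonneg (w - (K.orthogonalProjectionOnto q : E))]
  rw [norm_eq_zero, sub_eq_zero] at h3
  exact h3

end Proj

end LSR


set_option maxHeartbeats 4000000 in
open LSR in
/-- Lemma A.12, `solution_system_1`, of the paper. Robust recovery of
the coefficients `z*` from the approximate linear system
`min_z ‖∑ i, z_i V û_i − Q̂₁‖`: the least-squares problem has a unique minimizer `ẑ`, and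
`|ẑ_i − z*_i| ≤ C (κ⁴ k^{3/2} (δ₂ + δ₃) + κ² √k δ₄) ‖z*‖₁`. -/
theorem linear_system_recovery_vector :
    ∃ c C : ℝ, 0 < c ∧ 0 < C ∧
    ∀ (d k : ℕ), 1 ≤ k → k ≤ d →
    ∀ W : Matrix (Fin d) (Fin k) ℝ,
      (∀ i, (fun a => W a i) ≠ 0) → W.rank = k →
    ∀ κ : ℝ, κ = specNorm W / sminCol W →
    ∀ wbar : Fin k → Fin d → ℝ,
      (∀ i, wbar i = fun a => W a i / l2norm fun a' => W a' i) →
    ∀ U : Matrix (Fin d) (Fin k) ℝ, Uᵀ * U = 1 →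
      LinearMap.range U.mulVecLin = LinearMap.range W.mulVecLin →
    ∀ V : Matrix (Fin d) (Fin k) ℝ, Vᵀ * V = 1 →
    ∀ δ₂ δ₃ δ₄ : ℝ,
      specNorm (V * Vᵀ - U * Uᵀ) ≤ δ₂ → δ₂ ≤ c / (κ ^ 2 * Real.sqrt k) →
    ∀ s : Fin k → ℝ, (∀ i, s i = 1 ∨ s i = -1) →
    ∀ uhat : Fin k → Fin k → ℝ,
      (∀ i, l2norm (fun a => s i * uhat i a - Vᵀ.mulVec (wbar i) a) ≤ δ₃) →
      δ₃ ≤ c / (κ ^ 2 * Real.sqrt k) →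
    ∀ zstar : Fin k → ℝ,
    ∀ Q₁ : Fin d → ℝ, (∀ a, Q₁ a = ∑ i, zstar i * s i * wbar i a) → Q₁ ≠ 0 →
    ∀ Q₁hat : Fin d → ℝ,
      l2norm (fun a => Q₁hat a - Q₁ a) ≤ δ₄ * l2norm Q₁ → δ₄ ≤ 1 / 4 →
    ∃ zhat : Fin k → ℝ,
      (∀ z : Fin k → ℝ,
        l2norm (fun a => (∑ i, zhat i * V.mulVec (uhat i) a) - Q₁hat a) ≤
          l2norm (fun a => (∑ i, z i * V.mulVec (uhat i) a) - Q₁hat a)) ∧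
      (∀ z' : Fin k → ℝ,
        (∀ z : Fin k → ℝ,
          l2norm (fun a => (∑ i, z' i * V.mulVec (uhat i) a) - Q₁hat a) ≤
            l2norm (fun a => (∑ i, z i * V.mulVec (uhat i) a) - Q₁hat a)) →
        z' = zhat) ∧
      ∀ i, |zhat i - zstar i| ≤
        C * (κ ^ 4 * (k : ℝ) ^ ((3 : ℝ) / 2) * (δ₂ + δ₃) +
              κ ^ 2 * Real.sqrt k * δ₄) * ∑ i', |zstar i'| := by
  refine ⟨1/4, 4, by norm_num, by norm_num, ?_⟩
  intro d k hk hkd W hWcol hWrank κ hκ wbar hwbar U hU hUrange V hV δ₂ δ₃ δ₄ hδ₂ hδ₂c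
    s hs uhat huhat hδ₃c zstar Q₁ hQ₁ hQ₁ne Q₁hat hQ₁hat hδ₄c
  -- injectivity of W
  have hWinj : ∀ v : Fin k → ℝ, W.mulVec v = 0 → v = 0 := by
    rw [← Matrix.ker_mulVecLin_eq_bot_iff]
    have hfr : Module.finrank ℝ (LinearMap.range W.mulVecLin) = k := hWrank
    have hsum := LinearMap.finrank_range_add_finrank_ker W.mulVecLin
    rw [hfr, Module.finrank_fin_fun] at hsum
    have : Module.finrank ℝ (LinearMap.ker W.mulVecLin) = 0 := by omega
    exact Submodule.finrank_eq_zero.1 this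
  set smin := sminCol W with hsmin_def
  set smax := specNorm W with hsmax_def
  have hsmin : 0 < smin := smin_pos W hk hWinj
  have hminmax : smin ≤ smax := smin_le_spec W hk
  have hsmax : 0 < smax := lt_of_lt_of_le hsmin hminmax
  have hκ1 : 1 ≤ κ := by rw [hκ]; exact (one_le_div hsmin).2 hminmax
  have hκpos : 0 < κ := lt_of_lt_of_le zero_lt_one hκ1
  -- column norms
  set n : Fin k → ℝ := fun i => l2norm (fun a => W a i) with hn_def
  have hnpos : ∀ i, 0 < n i := by
    intro i
    rcases (l2norm_nonneg (fun a => W a i)).lt_or_eq with h | h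
    · exact h
    · exact absurd (l2norm_eq_zero_iff.1 h.symm) (hWcol i)
  have hcolW : ∀ i, (fun a => W a i) = W.mulVec (Pi.single i 1) := by
    intro i; funext a; simp [Matrix.mulVec_single]
  have hn_le : ∀ i, n i ≤ smax := by
    intro i
    have h1 : l2norm (Pi.single i (1:ℝ)) = 1 := by
      rw [l2norm_eq_norm]
      have : toE (Pi.single i (1:ℝ)) = EuclideanSpace.single i (1:ℝ) := rfl
      rw [this, EuclideanSpace.norm_single]; norm_num
    calc n i = l2norm (W.mulVec (Pi.single i 1)) := by
          rw [show n i = l2norm (fun a => W a i) from rfl, hcolW i]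
      _ ≤ smax * l2norm (Pi.single i (1:ℝ)) := mulVec_le_specNorm W _
      _ = smax := by rw [h1, mul_one]
  have hwbar_smul : ∀ i, wbar i = (n i)⁻¹ • (fun a => W a i) := by
    intro i; funext a
    rw [hwbar i]
    simp [hn_def, div_eq_inv_mul]
  have hwbar_norm : ∀ i, l2norm (wbar i) = 1 := by
    intro i
    rw [hwbar_smul i, l2norm_smul, abs_of_pos (inv_pos.2 (hnpos i))]
    exact inv_mul_cancel₀ (hnpos i).ne'
  -- wbar in the range of U, hence fixed by U Uᵀ
  have hUUT : ∀ i, (U * Uᵀ).mulVec (wbar i) = wbar i := by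
    intro i
    have hmem : wbar i ∈ LinearMap.range U.mulVecLin := by
      rw [hUrange]
      refine ⟨Pi.single i (n i)⁻¹, ?_⟩
      rw [Matrix.mulVecLin_apply, Matrix.mulVec_single, hwbar i]
      funext a
      simp [hn_def, div_eq_mul_inv]
    obtain ⟨t, ht⟩ := hmem
    rw [Matrix.mulVecLin_apply] at ht
    rw [← ht, Matrix.mulVec_mulVec, Matrix.mul_assoc, hU, Matrix.mul_one]
  have hs1 : ∀ i, s i * s i = 1 := by
    intro i; rcases hs i with h | h <;> rw [h] <;> norm_num
  have habs : ∀ i, |s i| = 1 := by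
    intro i; rcases hs i with h | h <;> rw [h] <;> norm_num
  -- the two matrices
  set A : Matrix (Fin d) (Fin k) ℝ := Matrix.of (fun a i => V.mulVec (uhat i) a) with hA_def
  set B : Matrix (Fin d) (Fin k) ℝ := Matrix.of (fun a i => s i * wbar i a) with hB_def
  -- column difference bound
  have hcol : ∀ i, l2norm (fun a => A a i - B a i) ≤ δ₂ + δ₃ := by
    intro i
    set e : Fin k → ℝ := fun j => s i * uhat i j - Vᵀ.mulVec (wbar i) j with he_def
    have he : l2norm e ≤ δ₃ := huhat i
    have huh : uhat i = s i • (Vᵀ.mulVec (wbar i) + e) := by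
      funext j
      simp only [Pi.smul_apply, Pi.add_apply, he_def, smul_eq_mul]
      linear_combination (-(uhat i j)) * hs1 i
    have hAcol : V.mulVec (uhat i) = s i • ((V * Vᵀ).mulVec (wbar i)) + s i • (V.mulVec e) := by
      rw [huh, Matrix.mulVec_smul, Matrix.mulVec_add, Matrix.mulVec_mulVec, smul_add]
    have hdiff : (fun a => A a i - B a i)
        = s i • ((V * Vᵀ - U * Uᵀ).mulVec (wbar i) + V.mulVec e) := by
      funext a
      show (V.mulVec (uhat i)) a - s i * wbar i a = _
      rw [hAcol]
      have h4 : (U * Uᵀ).mulVec (wbar i) a = wbar i a := by rw [hUUT i]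
      simp only [Matrix.sub_mulVec, Pi.add_apply, Pi.smul_apply, Pi.sub_apply, smul_eq_mul]
      rw [h4]
      ring
    rw [hdiff, l2norm_smul, habs i, one_mul]
    calc l2norm ((V * Vᵀ - U * Uᵀ).mulVec (wbar i) + V.mulVec e)
        ≤ l2norm ((V * Vᵀ - U * Uᵀ).mulVec (wbar i)) + l2norm (V.mulVec e) :=
          l2norm_add_le _ _
      _ ≤ specNorm (V * Vᵀ - U * Uᵀ) * l2norm (wbar i) + l2norm e := by
          rw [l2norm_mulVec_ortho V hV e]
          exact add_le_add (mulVec_le_specNorm _ _) le_rfl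
      _ ≤ δ₂ + δ₃ := by
          rw [hwbar_norm i, mul_one]
          exact add_le_add hδ₂ he
  -- perturbation bound
  have hδ₂0 : 0 ≤ δ₂ := le_trans (specNorm_nonneg _) hδ₂
  have hδ₃0 : 0 ≤ δ₃ := le_trans (l2norm_nonneg _) (huhat ⟨0, hk⟩)
  have hAB : ∀ z : Fin k → ℝ,
      l2norm ((A - B).mulVec z) ≤ (δ₂ + δ₃) * ∑ i, |z i| := by
    intro z
    calc l2norm ((A - B).mulVec z) ≤ ∑ i, |z i| * l2norm (fun a => (A - B) a i) :=
          l2norm_mulVec_le_sum_cols _ _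
      _ ≤ ∑ i, |z i| * (δ₂ + δ₃) := by
          refine Finset.sum_le_sum fun i _ => ?_
          refine mul_le_mul_of_nonneg_left ?_ (abs_nonneg _)
          have : (fun a => (A - B) a i) = fun a => A a i - B a i := by
            funext a; simp [Matrix.sub_apply]
          rw [this]; exact hcol i
      _ = (δ₂ + δ₃) * ∑ i, |z i| := by rw [← Finset.sum_mul]; ring
  -- lower bound for B
  have hB_low : ∀ z : Fin k → ℝ, smin * smax⁻¹ * l2norm z ≤ l2norm (B.mulVec z) := by
    intro z
    set y : Fin k → ℝ := fun i => z i * s i / n i with hy_def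
    have hBy : B.mulVec z = W.mulVec y := by
      funext a
      simp only [Matrix.mulVec, dotProduct, hB_def, Matrix.of_apply, hy_def]
      refine Finset.sum_congr rfl fun i _ => ?_
      rw [hwbar i]
      field_simp
      ring
    have hy_sq : ∀ i, (z i / smax) ^ 2 ≤ y i ^ 2 := by
      intro i
      have h1 : y i ^ 2 = z i ^ 2 / n i ^ 2 := by
        have hy : y i = z i * s i / n i := rfl
        rw [hy, div_pow, mul_pow, show s i ^ 2 = 1 by rw [sq]; exact hs1 i, mul_one]
      rw [h1, div_pow]
      apply div_le_div_of_nonneg_left (sq_nonneg _) (pow_pos (hnpos i) 2)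
      exact pow_le_pow_left₀ (hnpos i).le (hn_le i) 2
    have hy_norm : smax⁻¹ * l2norm z ≤ l2norm y := by
      have h1 : smax⁻¹ * l2norm z = l2norm (smax⁻¹ • z) := by
        rw [l2norm_smul, abs_of_pos (inv_pos.2 hsmax)]
      rw [h1, l2norm, l2norm]
      apply Real.sqrt_le_sqrt
      refine Finset.sum_le_sum fun i _ => ?_
      have : (smax⁻¹ • z) i = z i / smax := by
        simp [div_eq_inv_mul]
      rw [this]; exact hy_sq i
    calc smin * smax⁻¹ * l2norm z = smin * (smax⁻¹ * l2norm z) := by ring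
      _ ≤ smin * l2norm y := mul_le_mul_of_nonneg_left hy_norm hsmin.le
      _ ≤ l2norm (W.mulVec y) := smin_mul_le W hk y
      _ = l2norm (B.mulVec z) := by rw [hBy]
  have hκinv : smin * smax⁻¹ = κ⁻¹ := by
    rw [hκ, ← div_eq_mul_inv, inv_div]
  -- the perturbation is at most 1/(2κ) in operator norm
  have hsk : (0:ℝ) < Real.sqrt k := Real.sqrt_pos.2 (by exact_mod_cast hk)
  have hδsum : (δ₂ + δ₃) * Real.sqrt k ≤ 1 / (2 * κ) := by
    have h1 : δ₂ + δ₃ ≤ (1/2) / (κ ^ 2 * Real.sqrt k) := by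
      rw [div_eq_mul_inv] at hδ₂c hδ₃c ⊢
      linarith
    have h2 : (δ₂ + δ₃) * Real.sqrt k ≤ ((1/2) / (κ ^ 2 * Real.sqrt k)) * Real.sqrt k :=
      mul_le_mul_of_nonneg_right h1 hsk.le
    have h3 : ((1/2) / (κ ^ 2 * Real.sqrt k)) * Real.sqrt k = 1 / (2 * κ ^ 2) := by
      field_simp
    have h4 : 1 / (2 * κ ^ 2) ≤ 1 / (2 * κ) := by
      apply one_div_le_one_div_of_le (by positivity)
      nlinarith
    linarith
  -- lower bound for A
  have hA_low : ∀ z : Fin k → ℝ, 1 / (2 * κ) * l2norm z ≤ l2norm (A.mulVec z) := by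
    intro z
    have h1 : B.mulVec z = A.mulVec z + (B - A).mulVec z := by
      rw [Matrix.sub_mulVec]; abel
    have h2 : l2norm (B.mulVec z) ≤ l2norm (A.mulVec z) + l2norm ((B - A).mulVec z) := by
      rw [h1]; exact l2norm_add_le _ _
    have h3 : (B - A).mulVec z = -((A - B).mulVec z) := by
      rw [← Matrix.neg_mulVec, neg_sub]
    have h4 : l2norm ((B - A).mulVec z) ≤ (δ₂ + δ₃) * ∑ i, |z i| := by
      rw [h3, l2norm_neg]; exact hAB z
    have h5 : (δ₂ + δ₃) * ∑ i, |z i| ≤ (δ₂ + δ₃) * (Real.sqrt k * l2norm z) := by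
      apply mul_le_mul_of_nonneg_left _ (by linarith)
      have := sum_abs_le_sqrt_card_mul z
      simpa [Fintype.card_fin] using this
    have h6 : (δ₂ + δ₃) * (Real.sqrt k * l2norm z) ≤ 1 / (2 * κ) * l2norm z := by
      have := mul_le_mul_of_nonneg_right hδsum (l2norm_nonneg z)
      calc (δ₂ + δ₃) * (Real.sqrt k * l2norm z)
          = ((δ₂ + δ₃) * Real.sqrt k) * l2norm z := by ring
        _ ≤ 1 / (2 * κ) * l2norm z := this
    have h7 : κ⁻¹ * l2norm z ≤ l2norm (B.mulVec z) := by
      rw [← hκinv]; exact hB_low z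
    have h8 : κ⁻¹ = 1 / κ := by rw [inv_eq_one_div]
    have hκne : κ ≠ 0 := ne_of_gt hκpos
    have h10 : 1 / κ * l2norm z
        = 1 / (2 * κ) * l2norm z + 1 / (2 * κ) * l2norm z := by
      field_simp
      ring
    rw [h8] at h7
    linarith
  -- injectivity of A
  have hAinj : ∀ z z' : Fin k → ℝ, A.mulVec z = A.mulVec z' → z = z' := by
    intro z z' h
    have h1 : A.mulVec (z - z') = 0 := by
      rw [Matrix.mulVec_sub, h, sub_self]
    have h2 := hA_low (z - z')
    rw [h1, l2norm_eq_zero_iff.2 rfl] at h2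
    have h3 : l2norm (z - z') ≤ 0 := by
      have hpos : 0 < 1 / (2 * κ) := by positivity
      nlinarith [l2norm_nonneg (z - z')]
    have h4 : l2norm (z - z') = 0 := le_antisymm h3 (l2norm_nonneg _)
    have := l2norm_eq_zero_iff.1 h4
    exact sub_eq_zero.1 this
  -- set up the projection
  set L := Matrix.toEuclideanLin A with hL_def
  have hLtoE : ∀ z : Fin k → ℝ, L (toE z) = toE (A.mulVec z) := by
    intro z; rfl
  set K := LinearMap.range L with hK_def
  set q : EuclideanSpace ℝ (Fin d) := toE Q₁hat with hq_def
  set p : EuclideanSpace ℝ (Fin d) := (K.orthogonalProjectionOnto q : EuclideanSpace ℝ (Fin d))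
    with hp_def
  have hpK : p ∈ K := (K.orthogonalProjectionOnto q).2
  obtain ⟨zhE, hzh⟩ := hpK
  set zhat : Fin k → ℝ := (WithLp.equiv 2 (Fin k → ℝ)) zhE with hzhat_def
  have htozh : toE zhat = zhE := rfl
  -- rewrite the objective
  have hobj : ∀ z : Fin k → ℝ,
      l2norm (fun a => (∑ i, z i * V.mulVec (uhat i) a) - Q₁hat a)
        = ‖L (toE z) - q‖ := by
    intro z
    have h1 : (fun a => (∑ i, z i * V.mulVec (uhat i) a) - Q₁hat a)
        = A.mulVec z - Q₁hat := by
      funext a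
      simp only [Pi.sub_apply, Matrix.mulVec, dotProduct, hA_def, Matrix.of_apply]
      congr 1
      exact Finset.sum_congr rfl fun i _ => mul_comm _ _
    rw [h1, l2norm_eq_norm, toE_sub, hLtoE, hq_def]
  have hLzh : L (toE zhat) = p := by rw [htozh, hzh]
  refine ⟨zhat, ?_, ?_, ?_⟩
  · -- minimality
    intro z
    rw [hobj zhat, hobj z, hLzh]
    exact proj_min K q (L (toE z)) ⟨toE z, rfl⟩
  · -- uniqueness
    intro z' hz'
    have h1 := hz' zhat
    rw [hobj z', hobj zhat, hLzh] at h1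
    have h2 : L (toE z') = p := proj_unique K q (L (toE z')) ⟨toE z', rfl⟩ h1
    have h3 : A.mulVec z' = A.mulVec zhat := by
      have := h2.trans hLzh.symm
      rw [hLtoE, hLtoE] at this
      exact toE_inj this
    exact hAinj z' zhat h3
  · -- error bound
    intro i
    have hQB : Q₁ = B.mulVec zstar := by
      funext a
      rw [hQ₁ a]
      simp only [Matrix.mulVec, dotProduct, hB_def, Matrix.of_apply]
      exact Finset.sum_congr rfl fun j _ => by ring
    have hQpos : 0 < l2norm Q₁ := by
      rcases (l2norm_nonneg Q₁).lt_or_eq with h | h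
      · exact h
      · exact absurd (l2norm_eq_zero_iff.1 h.symm) hQ₁ne
    have hδ₄0 : 0 ≤ δ₄ := by
      by_contra h
      push_neg at h
      nlinarith [l2norm_nonneg (fun a => Q₁hat a - Q₁ a)]
    have hQnorm : l2norm Q₁ ≤ ∑ i', |zstar i'| := by
      rw [hQB]
      calc l2norm (B.mulVec zstar) ≤ ∑ i', |zstar i'| * l2norm (fun a => B a i') :=
            l2norm_mulVec_le_sum_cols _ _
        _ = ∑ i', |zstar i'| := by
            refine Finset.sum_congr rfl fun j _ => ?_
            have : (fun a => B a j) = s j • wbar j := by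
              funext a; simp [hB_def]
            rw [this, l2norm_smul, habs j, hwbar_norm j]
            ring
    set Sz := ∑ i', |zstar i'| with hSz_def
    have hSz0 : 0 ≤ Sz := Finset.sum_nonneg fun _ _ => abs_nonneg _
    -- distance from q to L zstar
    have hd1 : ‖q - L (toE zstar)‖ ≤ (δ₄ + (δ₂ + δ₃)) * Sz := by
      have e1 : ‖q - toE Q₁‖ ≤ δ₄ * Sz := by
        have : q - toE Q₁ = toE (fun a => Q₁hat a - Q₁ a) := rfl
        rw [this, ← l2norm_eq_norm]
        calc l2norm (fun a => Q₁hat a - Q₁ a) ≤ δ₄ * l2norm Q₁ := hQ₁hat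
          _ ≤ δ₄ * Sz := mul_le_mul_of_nonneg_left hQnorm hδ₄0
      have e2 : ‖toE Q₁ - L (toE zstar)‖ ≤ (δ₂ + δ₃) * Sz := by
        rw [hLtoE, ← toE_sub, ← l2norm_eq_norm]
        have h1 : Q₁ - A.mulVec zstar = (B - A).mulVec zstar := by
          rw [Matrix.sub_mulVec, hQB]
        rw [h1]
        have h2 : (B - A).mulVec zstar = -((A - B).mulVec zstar) := by
          rw [← Matrix.neg_mulVec, neg_sub]
        rw [h2, l2norm_neg]
        exact hAB zstar
      calc ‖q - L (toE zstar)‖ ≤ ‖q - toE Q₁‖ + ‖toE Q₁ - L (toE zstar)‖ := by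
            have := norm_sub_le_norm_sub_add_norm_sub q (toE Q₁) (L (toE zstar))
            exact this
        _ ≤ δ₄ * Sz + (δ₂ + δ₃) * Sz := add_le_add e1 e2
        _ = (δ₄ + (δ₂ + δ₃)) * Sz := by ring
    have hpq : ‖p - q‖ ≤ ‖L (toE zstar) - q‖ :=
      proj_min K q (L (toE zstar)) ⟨toE zstar, rfl⟩
    have hd2 : ‖p - L (toE zstar)‖ ≤ 2 * ((δ₄ + (δ₂ + δ₃)) * Sz) := by
      have t1 : ‖p - L (toE zstar)‖ ≤ ‖p - q‖ + ‖q - L (toE zstar)‖ :=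
        norm_sub_le_norm_sub_add_norm_sub p q (L (toE zstar))
      have t2 : ‖L (toE zstar) - q‖ = ‖q - L (toE zstar)‖ := norm_sub_rev _ _
      linarith
    have hdiffnorm : l2norm (fun j => zhat j - zstar j)
        ≤ 2 * κ * (2 * ((δ₄ + (δ₂ + δ₃)) * Sz)) := by
      have h1 : A.mulVec (fun j => zhat j - zstar j) = A.mulVec zhat - A.mulVec zstar := by
        have : (fun j => zhat j - zstar j) = zhat - zstar := rfl
        rw [this, Matrix.mulVec_sub]
      have h2 : ‖toE (A.mulVec zhat) - toE (A.mulVec zstar)‖ ≤ 2 * ((δ₄ + (δ₂ + δ₃)) * Sz) := by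
        rw [← hLtoE, ← hLtoE, hLzh]
        exact hd2
      have h3 : l2norm (A.mulVec (fun j => zhat j - zstar j)) ≤ 2 * ((δ₄ + (δ₂ + δ₃)) * Sz) := by
        rw [h1, l2norm_eq_norm, toE_sub]
        exact h2
      have h4 := hA_low (fun j => zhat j - zstar j)
      have hκpos' : (0:ℝ) < 2 * κ := by positivity
      rw [div_mul_eq_mul_div, one_mul, div_le_iff₀ hκpos'] at h4
      calc l2norm (fun j => zhat j - zstar j)
          ≤ l2norm (A.mulVec (fun j => zhat j - zstar j)) * (2 * κ) := h4
        _ ≤ 2 * ((δ₄ + (δ₂ + δ₃)) * Sz) * (2 * κ) := by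
            apply mul_le_mul_of_nonneg_right h3 hκpos'.le
        _ = 2 * κ * (2 * ((δ₄ + (δ₂ + δ₃)) * Sz)) := by ring
    have habs_le : |zhat i - zstar i| ≤ 2 * κ * (2 * ((δ₄ + (δ₂ + δ₃)) * Sz)) :=
      le_trans (abs_le_l2norm (fun j => zhat j - zstar j) i) hdiffnorm
    -- final arithmetic
    have hrk : (1:ℝ) ≤ (k : ℝ) ^ ((3:ℝ)/2) :=
      Real.one_le_rpow (by exact_mod_cast hk) (by norm_num)
    have hsk1 : (1:ℝ) ≤ Real.sqrt k := by
      rw [show (1:ℝ) = Real.sqrt 1 by rw [Real.sqrt_one]]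
      exact Real.sqrt_le_sqrt (by exact_mod_cast hk)
    have key : 2 * κ * (2 * ((δ₄ + (δ₂ + δ₃)) * Sz))
        ≤ 4 * (κ ^ 4 * (k : ℝ) ^ ((3:ℝ)/2) * (δ₂ + δ₃) + κ ^ 2 * Real.sqrt k * δ₄) * Sz := by
      have hκ4 : κ ≤ κ ^ 4 := le_self_pow₀ hκ1 (by norm_num)
      have hκ2 : κ ≤ κ ^ 2 := le_self_pow₀ hκ1 (by norm_num)
      have c1 : κ ≤ κ ^ 4 * (k : ℝ) ^ ((3:ℝ)/2) := by
        calc κ ≤ κ ^ 4 := hκ4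
          _ = κ ^ 4 * 1 := (mul_one _).symm
          _ ≤ κ ^ 4 * (k : ℝ) ^ ((3:ℝ)/2) :=
              mul_le_mul_of_nonneg_left hrk (by positivity)
      have c2 : κ ≤ κ ^ 2 * Real.sqrt k := by
        calc κ ≤ κ ^ 2 := hκ2
          _ = κ ^ 2 * 1 := (mul_one _).symm
          _ ≤ κ ^ 2 * Real.sqrt k :=
              mul_le_mul_of_nonneg_left hsk1 (by positivity)
      have c3 : κ * (δ₂ + δ₃) ≤ κ ^ 4 * (k : ℝ) ^ ((3:ℝ)/2) * (δ₂ + δ₃) :=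
        mul_le_mul_of_nonneg_right c1 (by linarith)
      have c4 : κ * δ₄ ≤ κ ^ 2 * Real.sqrt k * δ₄ :=
        mul_le_mul_of_nonneg_right c2 hδ₄0
      have c5 : κ * (δ₄ + (δ₂ + δ₃)) ≤ κ ^ 4 * (k : ℝ) ^ ((3:ℝ)/2) * (δ₂ + δ₃)
          + κ ^ 2 * Real.sqrt k * δ₄ := by
        have : κ * (δ₄ + (δ₂ + δ₃)) = κ * δ₄ + κ * (δ₂ + δ₃) := by ring
        linarith
      have c6 : 2 * κ * (2 * ((δ₄ + (δ₂ + δ₃)) * Sz))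
          = 4 * (κ * (δ₄ + (δ₂ + δ₃))) * Sz := by ring
      rw [c6]
      have := mul_le_mul_of_nonneg_right c5 hSz0
      nlinarith
    exact le_trans habs_le key
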